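/- For every positive integer s there exists a positive integer s' such that every linear 3-uniform hypergraph G containing no induced matching of size s satisfies ν(G) ≤ s'. -/
import Mathlib


open Finset

/-- `(V, E)` is a hypergraph: every edge is a nonempty subset of `V`. -/
def IsHypergraph {α : Type*} (V : Finset α) (E : Finset (Finset α)) : Prop :=
  ∀ e ∈ E, e ⊆ V ∧ e.Nonempty

/-- A matching: a set of pairwise disjoint edges. -/
def IsMatching {α : Type*} (M : Finset (Finset α)) : Prop :=
  ∀ e ∈ M, ∀ f ∈ M, e ≠ f → Disjoint e f

/-- `ν(G) ≤ s`: every matching consisting of edges of `E` has at most `s` edges. -/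
def MatchNumLE {α : Type*} (E : Finset (Finset α)) (s : ℕ) : Prop :=
  ∀ M ⊆ E, IsMatching M → M.card ≤ s

/-- `M` is an induced matching of the hypergraph with edge set `E`: a matching
`M ⊆ E` such that the subhypergraph induced on the union of the edges of `M`
has no edges other than those of `M`. -/
def IsInducedMatching {α : Type*} [DecidableEq α] (E : Finset (Finset α))
    (M : Finset (Finset α)) : Prop :=
  M ⊆ E ∧ IsMatching M ∧ ∀ f ∈ E, f ⊆ M.biUnion id → f ∈ M

namespace NoIndMatchAux

variable {α : Type} [DecidableEq α]

/-- `e` conflicts with `S` (relative to edge set `E`): some edge `f ∈ E` meets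
`e` and two distinct members of `S`. -/
def Conf (E S : Finset (Finset α)) (e : Finset α) : Prop :=
  ∃ f ∈ E, (f ∩ e).Nonempty ∧ ∃ w₁ ∈ S, ∃ w₂ ∈ S,
    w₁ ≠ w₂ ∧ (f ∩ w₁).Nonempty ∧ (f ∩ w₂).Nonempty

/-- No edge of `E` meets three distinct members of `S`. -/
def GoodS (E S : Finset (Finset α)) : Prop :=
  ∀ f ∈ E, ∀ w₁ ∈ S, ∀ w₂ ∈ S, ∀ w₃ ∈ S,
    w₁ ≠ w₂ → w₁ ≠ w₃ → w₂ ≠ w₃ →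
    (f ∩ w₁).Nonempty → (f ∩ w₂).Nonempty → (f ∩ w₃).Nonempty → False

/-- Counting step: adding `e` to `S` creates at most `9 * S.card` new conflicts
among the remaining candidate edges. -/
lemma conf_card_le (E M S R D : Finset (Finset α)) (e : Finset α)
    (h3 : ∀ e ∈ E, e.card = 3)
    (hlin : ∀ e ∈ E, ∀ f ∈ E, e ≠ f → (e ∩ f).card ≤ 1)
    (hME : M ⊆ E) (hM : IsMatching M)
    (hSM : S ⊆ M) (hRM : R ⊆ M) (hSR : Disjoint S R)
    (he : e ∈ R)
    (hinv : ∀ e' ∈ R, ¬ Conf E S e')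
    (hD : D ⊆ R.erase e)
    (hDconf : ∀ e' ∈ D, Conf E (insert e S) e') :
    D.card ≤ 9 * S.card := by
  classical
  have heM : e ∈ M := hRM he
  have heE : e ∈ E := hME heM
  have heS : e ∉ S := fun h => (Finset.disjoint_left.mp hSR h) he
  have hecard : e.card = 3 := h3 e heE
  obtain ⟨a, ha⟩ : e.Nonempty := Finset.card_pos.mp (by omega)
  have hQ : ∀ e' ∈ D, ∃ p : α × α, p.1 ∈ e ∧ (∃ w ∈ S, p.2 ∈ w) ∧
      ∃ f ∈ E, p.1 ∈ f ∧ p.2 ∈ f ∧ (f ∩ e').Nonempty := by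
    intro e' he'
    obtain ⟨f, hf, hfe', w₁, hw₁, w₂, hw₂, hne, m₁, m₂⟩ := hDconf e' he'
    have he'R : e' ∈ R := Finset.mem_of_mem_erase (hD he')
    have hnotconf := hinv e' he'R
    rcases Finset.mem_insert.mp hw₁ with rfl | h₁
    · have h₂ : w₂ ∈ S := (Finset.mem_insert.mp hw₂).resolve_left (fun h => hne h.symm)
      obtain ⟨v, hv⟩ := m₁
      obtain ⟨u, hu⟩ := m₂
      exact ⟨(v, u), (Finset.mem_inter.mp hv).2, ⟨w₂, h₂, (Finset.mem_inter.mp hu).2⟩,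
        f, hf, (Finset.mem_inter.mp hv).1, (Finset.mem_inter.mp hu).1, hfe'⟩
    · rcases Finset.mem_insert.mp hw₂ with rfl | h₂
      · obtain ⟨v, hv⟩ := m₂
        obtain ⟨u, hu⟩ := m₁
        exact ⟨(v, u), (Finset.mem_inter.mp hv).2, ⟨w₁, h₁, (Finset.mem_inter.mp hu).2⟩,
          f, hf, (Finset.mem_inter.mp hv).1, (Finset.mem_inter.mp hu).1, hfe'⟩
      · exact absurd ⟨f, hf, hfe', w₁, h₁, w₂, h₂, hne, m₁, m₂⟩ hnotconf
  set φ : Finset α → α × α := fun e' =>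
    if h : ∃ p : α × α, p.1 ∈ e ∧ (∃ w ∈ S, p.2 ∈ w) ∧
        ∃ f ∈ E, p.1 ∈ f ∧ p.2 ∈ f ∧ (f ∩ e').Nonempty
    then h.choose else (a, a) with hφ
  have hspec : ∀ e' ∈ D, (φ e').1 ∈ e ∧ (∃ w ∈ S, (φ e').2 ∈ w) ∧
      ∃ f ∈ E, (φ e').1 ∈ f ∧ (φ e').2 ∈ f ∧ (f ∩ e').Nonempty := by
    intro e' he'
    have h := hQ e' he'
    simp only [hφ, dif_pos h]
    exact h.choose_spec
  have hmaps : ∀ e' ∈ D, φ e' ∈ e ×ˢ S.biUnion id := by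
    intro e' he'
    obtain ⟨h1, ⟨w, hw, h2⟩, -⟩ := hspec e' he'
    exact Finset.mem_product.mpr ⟨h1, Finset.mem_biUnion.mpr ⟨w, hw, h2⟩⟩
  have hDmem : ∀ e' ∈ D, e' ∈ M ∧ e' ≠ e ∧ e' ∉ S := by
    intro e' he'
    have h1 := hD he'
    refine ⟨hRM (Finset.mem_of_mem_erase h1), Finset.ne_of_mem_erase h1, ?_⟩
    exact fun h => (Finset.disjoint_left.mp hSR h) (Finset.mem_of_mem_erase h1)
  have hinj : Set.InjOn φ ↑D := by
    intro e₁ he₁' e₂ he₂' heq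
    have he₁ : e₁ ∈ D := he₁'
    have he₂ : e₂ ∈ D := he₂'
    by_contra hne
    obtain ⟨hv₁, ⟨w₁, hw₁S, hu₁⟩, f₁, hf₁, hvf₁, huf₁, hfe₁⟩ := hspec e₁ he₁
    obtain ⟨hv₂, ⟨w₂, hw₂S, hu₂⟩, f₂, hf₂, hvf₂, huf₂, hfe₂⟩ := hspec e₂ he₂
    rw [heq] at hv₁ hu₁ hvf₁ huf₁
    set v := (φ e₂).1
    set u := (φ e₂).2
    obtain ⟨he₁M, he₁e, he₁S⟩ := hDmem e₁ he₁
    obtain ⟨he₂M, he₂e, he₂S⟩ := hDmem e₂ he₂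
    have hw₁M : w₁ ∈ M := hSM hw₁S
    have hew₁ : e ≠ w₁ := fun h => heS (h ▸ hw₁S)
    have hvu : v ≠ u := by
      intro h
      exact (Finset.disjoint_left.mp (hM e heM w₁ hw₁M hew₁) hv₁) (h ▸ hu₁)
    have hf12 : f₁ = f₂ := by
      by_contra hff
      have hle := hlin f₁ hf₁ f₂ hf₂ hff
      have hsub : ({v, u} : Finset α) ⊆ f₁ ∩ f₂ := by
        intro y hy
        rcases Finset.mem_insert.mp hy with rfl | hy
        · exact Finset.mem_inter.mpr ⟨hvf₁, hvf₂⟩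
        · rw [Finset.mem_singleton.mp hy]
          exact Finset.mem_inter.mpr ⟨huf₁, huf₂⟩
      have h2 : ({v, u} : Finset α).card = 2 := by
        rw [Finset.card_insert_of_notMem (by simp [hvu]), Finset.card_singleton]
      have := Finset.card_le_card hsub
      omega
    subst hf12
    obtain ⟨x₁, hx₁⟩ := hfe₁
    obtain ⟨x₂, hx₂⟩ := hfe₂
    have hx₁f : x₁ ∈ f₁ := (Finset.mem_inter.mp hx₁).1
    have hx₁e : x₁ ∈ e₁ := (Finset.mem_inter.mp hx₁).2
    have hx₂f : x₂ ∈ f₁ := (Finset.mem_inter.mp hx₂).1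
    have hx₂e : x₂ ∈ e₂ := (Finset.mem_inter.mp hx₂).2
    -- v ∉ e₁, e₂ ; u ∉ e₁, e₂ ; x₁ ≠ x₂
    have hve₁ : v ∉ e₁ :=
      Finset.disjoint_left.mp (hM e heM e₁ he₁M (Ne.symm he₁e)) hv₁
    have hve₂ : v ∉ e₂ :=
      Finset.disjoint_left.mp (hM e heM e₂ he₂M (Ne.symm he₂e)) hv₁
    have hw₁e₁ : w₁ ≠ e₁ := fun h => he₁S (h ▸ hw₁S)
    have hw₁e₂ : w₁ ≠ e₂ := fun h => he₂S (h ▸ hw₁S)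
    have hue₁ : u ∉ e₁ := Finset.disjoint_left.mp (hM w₁ hw₁M e₁ he₁M hw₁e₁) hu₁
    have hue₂ : u ∉ e₂ := Finset.disjoint_left.mp (hM w₁ hw₁M e₂ he₂M hw₁e₂) hu₁
    have hx12 : x₁ ≠ x₂ := by
      intro h
      exact (Finset.disjoint_left.mp (hM e₁ he₁M e₂ he₂M hne) hx₁e) (h ▸ hx₂e)
    have hxv₁ : x₁ ≠ v := fun h => hve₁ (h ▸ hx₁e)
    have hxv₂ : x₂ ≠ v := fun h => hve₂ (h ▸ hx₂e)
    have hxu₁ : x₁ ≠ u := fun h => hue₁ (h ▸ hx₁e)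
    have hxu₂ : x₂ ≠ u := fun h => hue₂ (h ▸ hx₂e)
    have hsub : ({v, u, x₁, x₂} : Finset α) ⊆ f₁ := by
      intro y hy
      simp only [Finset.mem_insert, Finset.mem_singleton] at hy
      rcases hy with rfl | rfl | rfl | rfl
      · exact hvf₁
      · exact huf₁
      · exact hx₁f
      · exact hx₂f
    have hc4 : ({v, u, x₁, x₂} : Finset α).card = 4 := by
      rw [Finset.card_insert_of_notMem (by simp [hvu, hxv₁.symm, hxv₂.symm]),
        Finset.card_insert_of_notMem (by simp [hxu₁.symm, hxu₂.symm]),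
        Finset.card_insert_of_notMem (by simp [hx12]), Finset.card_singleton]
    have hle := Finset.card_le_card hsub
    have := h3 f₁ hf₁
    omega
  have hcount : D.card ≤ (e ×ˢ S.biUnion id).card :=
    Finset.card_le_card_of_injOn φ hmaps hinj
  have hb : (S.biUnion id).card ≤ 3 * S.card := by
    calc (S.biUnion id).card ≤ ∑ w ∈ S, (id w).card := Finset.card_biUnion_le
    _ = ∑ w ∈ S, 3 := Finset.sum_congr rfl (fun w hw => h3 w (hME (hSM hw)))
    _ = 3 * S.card := by rw [Finset.sum_const, smul_eq_mul, mul_comm]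
  have hprod : (e ×ˢ S.biUnion id).card = 3 * (S.biUnion id).card := by
    rw [Finset.card_product, hecard]
  omega

/-- Greedy construction: a matching much larger than `s` contains a `GoodS`
sub-matching of size exactly `s`. -/
lemma exists_good (E M : Finset (Finset α))
    (h3 : ∀ e ∈ E, e.card = 3)
    (hlin : ∀ e ∈ E, ∀ f ∈ E, e ≠ f → (e ∩ f).card ≤ 1)
    (hME : M ⊆ E) (hM : IsMatching M) (s : ℕ)
    (hcard : s * (9 * s) < M.card) :
    ∃ S, S ⊆ M ∧ S.card = s ∧ GoodS E S := by
  classical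
  suffices H : ∀ k, ∀ S R : Finset (Finset α), S ⊆ M → R ⊆ M → Disjoint S R →
      GoodS E S → (∀ e' ∈ R, ¬ Conf E S e') → S.card + k = s →
      k * (9 * s) < R.card →
      ∃ S', S ⊆ S' ∧ S' ⊆ M ∧ S'.card = s ∧ GoodS E S' by
    obtain ⟨S', -, h1, h2, h3'⟩ := H s ∅ M (Finset.empty_subset M) Finset.Subset.rfl
      (Finset.disjoint_empty_left M)
      (fun f _ w₁ hw₁ => absurd hw₁ (Finset.notMem_empty w₁))
      (fun e' _ ⟨f, _, _, w₁, hw₁, _⟩ => absurd hw₁ (Finset.notMem_empty w₁))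
      (by simp) (by simpa using hcard)
    exact ⟨S', h1, h2, h3'⟩
  intro k
  induction k with
  | zero =>
    intro S R hSM _ _ hGood _ hcards _
    exact ⟨S, Finset.Subset.rfl, hSM, by omega, hGood⟩
  | succ k ih =>
    intro S R hSM hRM hSR hGood hinv hcards hR
    have hR0 : R.Nonempty := Finset.card_pos.mp (lt_of_le_of_lt (Nat.zero_le _) hR)
    obtain ⟨e, he⟩ := hR0
    have heM : e ∈ M := hRM he
    have heS : e ∉ S := fun h => (Finset.disjoint_left.mp hSR h) he
    set S' := insert e S with hS'
    set D := (R.erase e).filter (fun e' => Conf E S' e') with hDdef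
    set R' := (R.erase e).filter (fun e' => ¬ Conf E S' e') with hR'def
    have hS'M : S' ⊆ M := Finset.insert_subset heM hSM
    have hR'M : R' ⊆ M := fun x hx =>
      hRM (Finset.mem_of_mem_erase (Finset.mem_of_mem_filter x hx))
    have hS'R' : Disjoint S' R' := by
      rw [Finset.disjoint_left]
      intro x hx hx'
      have hx'e : x ∈ R.erase e := Finset.mem_of_mem_filter x hx'
      rcases Finset.mem_insert.mp hx with rfl | hxS
      · exact (Finset.ne_of_mem_erase hx'e) rfl
      · exact (Finset.disjoint_left.mp hSR hxS) (Finset.mem_of_mem_erase hx'e)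
    have hGood' : GoodS E S' := by
      intro f hf w₁ hw₁ w₂ hw₂ w₃ hw₃ h12 h13 h23 n1 n2 n3
      have key : ∀ u₁ u₂ : Finset α, u₁ ∈ S → u₂ ∈ S → u₁ ≠ u₂ →
          (f ∩ u₁).Nonempty → (f ∩ u₂).Nonempty → (f ∩ e).Nonempty → False :=
        fun u₁ u₂ hu₁ hu₂ hne m₁ m₂ me =>
          hinv e he ⟨f, hf, me, u₁, hu₁, u₂, hu₂, hne, m₁, m₂⟩
      rcases Finset.mem_insert.mp hw₁ with rfl | h₁
      · have h₂ : w₂ ∈ S := (Finset.mem_insert.mp hw₂).resolve_left (fun h => h12 h.symm)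
        have h₃ : w₃ ∈ S := (Finset.mem_insert.mp hw₃).resolve_left (fun h => h13 h.symm)
        exact key w₂ w₃ h₂ h₃ h23 n2 n3 n1
      · rcases Finset.mem_insert.mp hw₂ with rfl | h₂
        · have h₃ : w₃ ∈ S := (Finset.mem_insert.mp hw₃).resolve_left (fun h => h23 h.symm)
          exact key w₁ w₃ h₁ h₃ h13 n1 n3 n2
        · rcases Finset.mem_insert.mp hw₃ with rfl | h₃
          · exact key w₁ w₂ h₁ h₂ h12 n1 n2 n3
          · exact hGood f hf w₁ h₁ w₂ h₂ w₃ h₃ h12 h13 h23 n1 n2 n3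
    have hinv' : ∀ e' ∈ R', ¬ Conf E S' e' := by
      intro e' he'
      exact (Finset.mem_filter.mp he').2
    have hcards' : S'.card + k = s := by
      rw [hS', Finset.card_insert_of_notMem heS]
      omega
    have hDbound : D.card ≤ 9 * S.card := by
      apply conf_card_le E M S R D e h3 hlin hME hM hSM hRM hSR he hinv
        (Finset.filter_subset _ _)
      intro e' he'
      exact (Finset.mem_filter.mp he').2
    have hsplit : D.card + R'.card = (R.erase e).card :=
      Finset.card_filter_add_card_filter_not (fun e' => Conf E S' e')
    have herase : (R.erase e).card = R.card - 1 := Finset.card_erase_of_mem he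
    have hRpos : 1 ≤ R.card := Finset.card_pos.mpr ⟨e, he⟩
    have hsum : D.card + R'.card + 1 = R.card := by omega
    have h9 : 9 * S.card + 1 ≤ 9 * s := by omega
    have hmul : (k + 1) * (9 * s) = k * (9 * s) + 9 * s := by ring
    have hR' : k * (9 * s) < R'.card := by
      rw [hmul] at hR
      -- k*(9s) + 9s < R.card = D + R' + 1 ≤ 9*S.card + R' + 1 ≤ 9s + R'
      have : D.card + 1 ≤ 9 * s := by omega
      omega
    obtain ⟨S'', hsub, hm, hc, hg⟩ := ih S' R' hS'M hR'M hS'R' hGood' hinv' hcards' hR'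
    exact ⟨S'', (Finset.subset_insert e S).trans hsub, hm, hc, hg⟩

end NoIndMatchAux

/-- For every `s ≥ 1` there is `s' ≥ 1` such that every linear 3-uniform
hypergraph with no induced matching of size `s` satisfies `ν(G) ≤ s'`. -/
theorem matching_bounded_of_no_induced_matching (s : ℕ) (hs : 0 < s) :
    ∃ s' : ℕ, 0 < s' ∧
      ∀ (α : Type) [DecidableEq α] (V : Finset α) (E : Finset (Finset α)),
        IsHypergraph V E → (∀ e ∈ E, e.card = 3) →
        (∀ e ∈ E, ∀ f ∈ E, e ≠ f → (e ∩ f).card ≤ 1) →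
        (¬ ∃ M : Finset (Finset α), IsInducedMatching E M ∧ M.card = s) →
        MatchNumLE E s' := by
  refine ⟨9 * s * s, by positivity, ?_⟩
  intro α _ V E hH h3 hlin hno M hME hM
  by_contra hgt
  push_neg at hgt
  have hcard : s * (9 * s) < M.card := by
    have : s * (9 * s) = 9 * s * s := by ring
    omega
  obtain ⟨S, hSM, hScard, hGood⟩ :=
    NoIndMatchAux.exists_good E M h3 hlin hME hM s hcard
  apply hno
  refine ⟨S, ⟨hSM.trans hME, ?_, ?_⟩, hScard⟩
  · intro a ha b hb hab
    exact hM a (hSM ha) b (hSM hb) hab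
  · intro f hf hfsub
    by_contra hfS
    have hf3 := h3 f hf
    obtain ⟨v₁, v₂, v₃, h12, h13, h23, hfeq⟩ := Finset.card_eq_three.mp hf3
    have hv₁f : v₁ ∈ f := by rw [hfeq]; simp
    have hv₂f : v₂ ∈ f := by rw [hfeq]; simp
    have hv₃f : v₃ ∈ f := by rw [hfeq]; simp
    obtain ⟨w₁, hw₁, m₁⟩ := Finset.mem_biUnion.mp (hfsub hv₁f)
    obtain ⟨w₂, hw₂, m₂⟩ := Finset.mem_biUnion.mp (hfsub hv₂f)
    obtain ⟨w₃, hw₃, m₃⟩ := Finset.mem_biUnion.mp (hfsub hv₃f)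
    simp only [id] at m₁ m₂ m₃
    have key : ∀ vi vj : α, ∀ w : Finset α, w ∈ S → vi ∈ w → vj ∈ w →
        vi ∈ f → vj ∈ f → vi ≠ vj → False := by
      intro vi vj w hw hiw hjw hif hjf hij
      have hwE : w ∈ E := hME (hSM hw)
      have hfw : f ≠ w := fun h => hfS (h ▸ hw)
      have hle := hlin f hf w hwE hfw
      have hsub2 : ({vi, vj} : Finset α) ⊆ f ∩ w := by
        intro y hy
        rcases Finset.mem_insert.mp hy with rfl | hy
        · exact Finset.mem_inter.mpr ⟨hif, hiw⟩
        · rw [Finset.mem_singleton.mp hy]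
          exact Finset.mem_inter.mpr ⟨hjf, hjw⟩
      have h2 : ({vi, vj} : Finset α).card = 2 := by
        rw [Finset.card_insert_of_notMem (by simp [hij]), Finset.card_singleton]
      have := Finset.card_le_card hsub2
      omega
    have hne12 : w₁ ≠ w₂ := fun h => key v₁ v₂ w₁ hw₁ m₁ (h ▸ m₂) hv₁f hv₂f h12
    have hne13 : w₁ ≠ w₃ := fun h => key v₁ v₃ w₁ hw₁ m₁ (h ▸ m₃) hv₁f hv₃f h13
    have hne23 : w₂ ≠ w₃ := fun h => key v₂ v₃ w₂ hw₂ m₂ (h ▸ m₃) hv₂f hv₃f h23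
    exact hGood f hf w₁ hw₁ w₂ hw₂ w₃ hw₃ hne12 hne13 hne23
      ⟨v₁, Finset.mem_inter.mpr ⟨hv₁f, m₁⟩⟩
      ⟨v₂, Finset.mem_inter.mpr ⟨hv₂f, m₂⟩⟩
      ⟨v₃, Finset.mem_inter.mpr ⟨hv₃f, m₃⟩⟩
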